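/- The linking matrix of nanophrases is a finite type invariant of degree 1: for any nanophrase p with two semi-letters Ȧ, Ḃ, the alternating sum L(p_{AB}) − L(p_A) − L(p_B) + L(p_∅) is the zero matrix, where the four terms keep/delete A and B respectively. -/

import Mathlib

open List

attribute [local instance] Classical.propDecidable

/-- A symbol in a nanophrase: either a separator `none` or a letter occurrence
`some (x, a)` where `x` is the letter's name and `a` its label in `α`. -/
abbrev NSym (α : Type) := Option (ℕ × α)

/-- A phrase: list of symbols; `none` separates components. -/
abbrev NPhrase (α : Type) := List (NSym α)

/-- The list of letter occurrences of a phrase. -/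
def occs {α : Type} (p : NPhrase α) : List (ℕ × α) := p.filterMap id

/-- The set of (names of) letters appearing in a phrase. -/
def lettersOf {α : Type} (p : NPhrase α) : Finset ℕ := ((occs p).map Prod.fst).toFinset

/-- The rank: number of distinct letters. -/
def rank {α : Type} (p : NPhrase α) : ℕ := (lettersOf p).card

/-- A nanophrase: each letter appears exactly twice, with a consistent label. -/
def IsNano {α : Type} (p : NPhrase α) : Prop :=
  (∀ x ∈ lettersOf p, ((occs p).map Prod.fst).count x = 2) ∧
  (∀ x a b, (x, a) ∈ occs p → (x, b) ∈ occs p → a = b)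

/-- The number of components of a phrase. -/
def comps {α : Type} (p : NPhrase α) : ℕ := p.countP (fun s => s.isNone) + 1

/-- The subphrase with letter set restricted to `T`. -/
def restrict {α : Type} (p : NPhrase α) (T : Finset ℕ) : NPhrase α :=
  p.filter (fun s => match s with | none => true | some (x, _) => decide (x ∈ T))

/-- Isomorphism of (nano)phrases: a renaming of letters preserving labels. -/
def Iso {α : Type} (p q : NPhrase α) : Prop :=
  ∃ σ : ℕ ≃ ℕ, p.map (Option.map (fun xa => (σ xa.1, xa.2))) = q

/-- Angle bracket: the number of subphrases of `p` isomorphic to `q`. -/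
noncomputable def bracketN {α : Type} (q p : NPhrase α) : ℕ :=
  ((lettersOf p).powerset.filter (fun T => Iso (restrict p T) q)).card

/-- Homotopy moves for homotopy data `(α, τ, S)`. -/
inductive HMove {α : Type} (τ : α → α) (S : Set (α × α × α)) : NPhrase α → NPhrase α → Prop
  | h1 (x y : NPhrase α) (i : ℕ) (a : α) :
      HMove τ S (x ++ [some (i,a), some (i,a)] ++ y) (x ++ y)
  | h2 (x y z : NPhrase α) (i j : ℕ) (a b : α) (h : a = τ b) :
      HMove τ S (x ++ [some (i,a), some (j,b)] ++ y ++ [some (j,b), some (i,a)] ++ z)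
        (x ++ y ++ z)
  | h3 (x y z t : NPhrase α) (i j k : ℕ) (a b c : α) (h : (a,b,c) ∈ S) :
      HMove τ S
        (x ++ [some (i,a), some (j,b)] ++ y ++ [some (i,a), some (k,c)] ++ z
           ++ [some (j,b), some (k,c)] ++ t)
        (x ++ [some (j,b), some (i,a)] ++ y ++ [some (k,c), some (i,a)] ++ z
           ++ [some (k,c), some (j,b)] ++ t)

/-- Homotopy: equivalence generated by isomorphism and the moves H1, H2, H3. -/
def Homotopic {α : Type} (τ : α → α) (S : Set (α × α × α)) : NPhrase α → NPhrase α → Prop :=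
  Relation.EqvGen (fun p q => HMove τ S p q ∨ Iso p q)

/-- Build a phrase from a list of components. -/
def ofComponents {α : Type} (L : List (List (ℕ × α))) : NPhrase α :=
  ((L.map (fun c => c.map some)).intersperse [none]).flatten

variable {α : Type}

/-- The group π: generated by α with relations a + τ(a) = 0. -/
def piRel (τ : α → α) : AddSubgroup (FreeAbelianGroup α) :=
  AddSubgroup.closure {g | ∃ a, g = FreeAbelianGroup.of a + FreeAbelianGroup.of (τ a)}

abbrev PiGrp (τ : α → α) := FreeAbelianGroup α ⧸ piRel τ

/-- The image of a label `a : α` in π. -/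
def piMk (τ : α → α) (a : α) : PiGrp τ :=
  QuotientAddGroup.mk' (piRel τ) (FreeAbelianGroup.of a)

/-- Annotate each letter occurrence with the index of its component. -/
def ann : ℕ → NPhrase α → List (ℕ × ℕ × α)
  | _, [] => []
  | c, (none :: rest) => ann (c + 1) rest
  | c, (some (x, a) :: rest) => (c, x, a) :: ann c rest

/-- The `(i,j)` entry of the linking matrix: `0` on the diagonal, and otherwise the
sum in π of the labels of the letters having one occurrence in component `i` and
the other in component `j`. -/
noncomputable def lij (τ : α → α) (p : NPhrase α) (i j : ℕ) : PiGrp τ :=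
  ((ann 0 p).map (fun e =>
    if i ≠ j ∧ e.1 = i ∧ (j, e.2.1, e.2.2) ∈ ann 0 p then piMk τ e.2.2 else 0)).sum

lemma ann_restrict (T : Finset ℕ) : ∀ (c : ℕ) (p : NPhrase α),
    ann c (restrict p T) = (ann c p).filter (fun e => decide (e.2.1 ∈ T))
  | c, [] => rfl
  | c, (none :: rest) => by
      simp only [restrict, List.filter_cons] at *
      simpa [ann, restrict] using ann_restrict T (c+1) rest
  | c, (some (x, a) :: rest) => by
      have ih := ann_restrict T c rest
      simp only [restrict] at ih ⊢
      rw [List.filter_cons]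
      by_cases hx : x ∈ T
      · simp [ann, hx, ih, List.filter_cons]
      · simp [ann, hx, ih, List.filter_cons]

lemma ann_map_snd : ∀ (c : ℕ) (p : NPhrase α), (ann c p).map (fun e => e.2) = occs p
  | c, [] => rfl
  | c, (none :: rest) => by simp [ann, occs, List.filterMap_cons, ann_map_snd (c+1) rest]
  | c, (some (x, a) :: rest) => by
      simp [ann, occs, List.filterMap_cons, ann_map_snd c rest]

lemma mem_ann_letters {c : ℕ} {p : NPhrase α} {e : ℕ × ℕ × α} (he : e ∈ ann c p) :
    e.2.1 ∈ lettersOf p := by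
  have h2 : e.2 ∈ occs p := by
    rw [← ann_map_snd c p]; exact List.mem_map_of_mem he
  simp only [lettersOf, List.mem_toFinset, List.mem_map]
  exact ⟨e.2, h2, rfl⟩

lemma sum_map_filter {β γ : Type*} [AddCommMonoid γ] (l : List β) (q : β → Bool) (f : β → γ) :
    ((l.filter q).map f).sum = (l.map (fun x => if q x then f x else 0)).sum := by
  induction l with
  | nil => rfl
  | cons a l ih => by_cases h : q a <;> simp [List.filter_cons, h, ih]

lemma sum_map4 {β γ : Type*} [AddCommGroup γ] (l : List β) (f g h k : β → γ) :
    (l.map f).sum - (l.map g).sum - (l.map h).sum + (l.map k).sum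
      = (l.map (fun x => f x - g x - h x + k x)).sum := by
  induction l with
  | nil => simp
  | cons a l ih =>
      simp only [List.map_cons, List.sum_cons, ← ih]
      abel

lemma lij_restrict (τ : α → α) (p : NPhrase α) (T : Finset ℕ) (i j : ℕ) :
    lij τ (restrict p T) i j
      = ((ann 0 p).map (fun e =>
          if e.2.1 ∈ T then
            (if i ≠ j ∧ e.1 = i ∧ (j, e.2.1, e.2.2) ∈ ann 0 p then piMk τ e.2.2 else 0)
          else 0)).sum := by
  unfold lij
  rw [ann_restrict T 0 p, sum_map_filter]
  congr 1
  apply List.map_congr_left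
  intro e he
  by_cases hT : e.2.1 ∈ T
  · have hmem : ((j, e.2.1, e.2.2) ∈ (ann 0 p).filter (fun e => decide (e.2.1 ∈ T)))
        ↔ (j, e.2.1, e.2.2) ∈ ann 0 p := by
      simp [List.mem_filter, hT]
    simp [hT, hmem]
  · simp [hT]

/-- the linking matrix is a finite type invariant of degree 1: for any
nanophrase `p` with two semi-letters `u ≠ v`, the alternating sum
`L(p_{uv}) − L(p_u) − L(p_v) + L(p_∅)` (keeping/deleting `u` and `v`) is the zero
matrix. -/
theorem linking_matrix_degree_one (τ : α → α) (hτ : Function.Involutive τ)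
    (p : NPhrase α) (hp : IsNano p)
    (u v : ℕ) (hu : u ∈ lettersOf p) (hv : v ∈ lettersOf p) (huv : u ≠ v) :
    ∀ i j : ℕ,
      lij τ p i j
        - lij τ (restrict p (lettersOf p \ {v})) i j
        - lij τ (restrict p (lettersOf p \ {u})) i j
        + lij τ (restrict p (lettersOf p \ {u, v})) i j = 0 := by
  intro i j
  rw [lij_restrict, lij_restrict, lij_restrict]
  unfold lij
  rw [sum_map4]
  apply List.sum_eq_zero
  intro x hx
  obtain ⟨e, he, rfl⟩ := List.mem_map.1 hx
  have hL : e.2.1 ∈ lettersOf p := mem_ann_letters he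
  by_cases h1 : e.2.1 = u
  · have h2 : e.2.1 ≠ v := h1 ▸ huv
    simp [Finset.mem_sdiff, hL, h1, h2, huv, hu, hv]
  · by_cases h2 : e.2.1 = v
    · simp [Finset.mem_sdiff, hL, h1, h2, hu, hv, Ne.symm huv]
    · simp [Finset.mem_sdiff, hL, h1, h2, hu, hv]
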